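/- Let p₁, p₂ ∈ ℂ with |p₁|² + |p₂|² = 1 and ℓ ∈ ℝ. Define d(t) = |p₂|² t − |p₁|²/t + 2ℓ on (0,∞). Then d has exactly one zero in (0,∞) if (p₁p₂ ≠ 0), or (p₂ = 0 and ℓ > 0), or (p₁ = 0 and ℓ < 0); in all other cases d has no zero in (0,∞). -/

import Mathlib

/-- Let `p₁, p₂ ∈ ℂ` with `|p₁|² + |p₂|² = 1` and `ℓ ∈ ℝ`, and set
`d(t) = |p₂|² t - |p₁|²/t + 2ℓ` on `(0,∞)`. Then `d` has exactly one zero in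
`(0,∞)` if `p₁p₂ ≠ 0`, or `p₂ = 0` and `ℓ > 0`, or `p₁ = 0` and `ℓ < 0`; in all
other cases `d` has no zero in `(0,∞)`. -/
theorem stmt11 (p1 p2 : ℂ) (hp : ‖p1‖ ^ 2 + ‖p2‖ ^ 2 = 1) (l : ℝ)
    (d : ℝ → ℝ)
    (hd : ∀ t : ℝ, d t = ‖p2‖ ^ 2 * t - ‖p1‖ ^ 2 / t + 2 * l) :
    ((p1 * p2 ≠ 0 ∨ (p2 = 0 ∧ 0 < l) ∨ (p1 = 0 ∧ l < 0)) →
      ∃! t : ℝ, 0 < t ∧ d t = 0) ∧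
    (¬(p1 * p2 ≠ 0 ∨ (p2 = 0 ∧ 0 < l) ∨ (p1 = 0 ∧ l < 0)) →
      ∀ t : ℝ, 0 < t → d t ≠ 0) := by
  set a := ‖p2‖ ^ 2 with ha
  set b := ‖p1‖ ^ 2 with hb
  have ha0 : 0 ≤ a := sq_nonneg _
  have hb0 : 0 ≤ b := sq_nonneg _
  constructor
  · rintro (h | ⟨h2, hl⟩ | ⟨h1, hl⟩)
    · have hp1 : p1 ≠ 0 := fun h' => h (by simp [h'])
      have hp2 : p2 ≠ 0 := fun h' => h (by simp [h'])
      have hb' : 0 < b := by rw [hb]; exact pow_pos (norm_pos_iff.mpr hp1) 2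
      have ha' : 0 < a := by rw [ha]; exact pow_pos (norm_pos_iff.mpr hp2) 2
      set s := Real.sqrt (l ^ 2 + a * b) with hs
      have hs2 : s ^ 2 = l ^ 2 + a * b := Real.sq_sqrt (by positivity)
      have hsl : l < s := by
        have h1 : Real.sqrt (l ^ 2) < s := by
          apply Real.sqrt_lt_sqrt (sq_nonneg l); nlinarith
        rw [Real.sqrt_sq_eq_abs] at h1
        exact lt_of_le_of_lt (le_abs_self l) h1
      have ht0 : 0 < (-l + s) / a := div_pos (by linarith) ha'
      refine ⟨(-l + s) / a, ⟨ht0, ?_⟩, ?_⟩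
      · have hne : -l + s ≠ 0 := by linarith [hsl]
        rw [hd]
        field_simp [hne, ha'.ne']
        nlinarith [hs2]
      · rintro y ⟨hy0, hyd⟩
        rw [hd] at hyd
        have e1 : a * y ^ 2 + 2 * l * y - b = 0 := by
          field_simp at hyd; nlinarith [hyd]
        have e2 : a * ((-l + s) / a) ^ 2 + 2 * l * ((-l + s) / a) - b = 0 := by
          have hne : -l + s ≠ 0 := by linarith [hsl]
          field_simp [hne, ha'.ne']
          nlinarith [hs2]
        have key : (y - (-l + s) / a) * (a * y * ((-l + s) / a) + b) = 0 := by
          nlinarith [e1, e2, mul_pos hy0 ht0]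
        have hpos : 0 < a * y * ((-l + s) / a) + b := by positivity
        have := mul_eq_zero.mp key
        rcases this with h' | h'
        · linarith
        · linarith
    · -- p2 = 0, l > 0
      have hb1 : b = 1 := by simp [hb, h2, ha] at hp ⊢; simpa [h2] using hp
      have ha1 : a = 0 := by simp [ha, h2]
      refine ⟨1 / (2 * l), ⟨by positivity, ?_⟩, ?_⟩
      · rw [hd, ha1, hb1]; field_simp; ring
      · rintro y ⟨hy0, hyd⟩
        rw [hd, ha1, hb1] at hyd
        field_simp at hyd ⊢
        linarith
    · -- p1 = 0, l < 0
      have ha1 : a = 1 := by simp [hb, h1, ha] at hp ⊢; simpa [h1] using hp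
      have hb1 : b = 0 := by simp [hb, h1]
      refine ⟨-(2 * l), ⟨by linarith, ?_⟩, ?_⟩
      · rw [hd, ha1, hb1]; ring
      · rintro y ⟨hy0, hyd⟩
        rw [hd, ha1, hb1] at hyd
        simp at hyd; linarith
  · intro h t ht
    push_neg at h
    obtain ⟨h0, h2, h1⟩ := h
    rw [hd]
    rcases mul_eq_zero.mp h0 with hz | hz
    · -- p1 = 0
      have hl := h1 hz
      have ha1 : a = 1 := by simp [hb, hz, ha] at hp ⊢; simpa [hz] using hp
      have hb1 : b = 0 := by simp [hb, hz]
      rw [ha1, hb1]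
      intro hc
      simp at hc; linarith
    · -- p2 = 0
      have hl := h2 hz
      have hb1 : b = 1 := by simp [hb, hz, ha] at hp ⊢; simpa [hz] using hp
      have ha1 : a = 0 := by simp [ha, hz]
      rw [ha1, hb1]
      intro hc
      field_simp at hc
      nlinarith [mul_nonneg (neg_nonneg.mpr hl) ht.le]
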